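/- Let Q be a monic polynomial of degree t over F_q, let ℓ ≥ 0, let ε be a Hayes equivalence class with respect to (ℓ,Q), and let D ⊆ F_q contain no zero of Q, with n = |D|. Then for all integers k ≥ 0 and 0 ≤ r ≤ k, |P(Y_k(ε)=r) − C(n,r)·(1/q)^r·(1−1/q)^{n−r}| ≤ (2/(k−r)!)·C(n,r)·(1/q)^r. In particular, as k−r → ∞, P(Y_k(ε)=r) ∼ C(n,r)·(1/q)^r·(1−1/q)^{n−r}, i.e. the number of distinct zeros in D of a random polynomial in the class is asymptotically binomial. -/

import Mathlib

open Polynomial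

noncomputable section

/-- Hayes equivalence with respect to `ℓ` and a monic polynomial `Q`:
both polynomials are coprime to `Q`, their reversals agree modulo `x^(ℓ+1)`,
and they agree modulo `Q`. -/
def HayesEquiv {Fq : Type*} [Field Fq] (ℓ : ℕ) (Q f g : Polynomial Fq) : Prop :=
  IsCoprime f Q ∧ IsCoprime g Q ∧
    (X : Polynomial Fq) ^ (ℓ + 1) ∣ f.reverse - g.reverse ∧ Q ∣ f - g

/-- `P(Y_k(ε) = r)`: the probability that a uniformly random monic polynomial of degree
`k + t + ℓ` in the Hayes class of `ε` has exactly `r` distinct zeros in `D`. -/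
def probY {Fq : Type*} [Field Fq] [Fintype Fq] [DecidableEq Fq] (ℓ : ℕ)
    (Q ε : Polynomial Fq) (D : Finset Fq) (k r : ℕ) : ℝ :=
  (Nat.card {f : Polynomial Fq // f.Monic ∧ f.natDegree = k + Q.natDegree + ℓ ∧
      HayesEquiv ℓ Q ε f ∧ (D.filter fun x => f.eval x = 0).card = r} : ℝ) /
    (Fintype.card Fq : ℝ) ^ k


namespace HayesAux


/-- subset-chain identity for binomial coefficients, valid for all naturals -/
lemma choose_helper (j r i : ℕ) :
    j.choose (r + i) * (r + i).choose r = j.choose r * (j - r).choose i := by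
  by_cases h : r + i ≤ j
  · have := Nat.choose_mul (n := j) (k := r + i) (s := r) (Nat.le_add_right r i)
    simpa [Nat.add_sub_cancel_left] using this
  · push_neg at h
    by_cases hr : r ≤ j
    · have h1 : j.choose (r + i) = 0 := Nat.choose_eq_zero_of_lt h
      have h2 : (j - r).choose i = 0 := Nat.choose_eq_zero_of_lt (by omega)
      simp [h1, h2]
    · push_neg at hr
      have h1 : j.choose (r + i) = 0 := Nat.choose_eq_zero_of_lt (by omega)
      have h2 : j.choose r = 0 := Nat.choose_eq_zero_of_lt hr
      simp [h1, h2]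

/-- partial alternating sum of binomial coefficients -/
lemma alt_sum (d : ℕ) (hd : 1 ≤ d) (u : ℕ) :
    ∑ i ∈ Finset.range (u + 1), (-1 : ℤ) ^ i * (d.choose i) = (-1) ^ u * ((d - 1).choose u) := by
  induction u with
  | zero => simp
  | succ u ih =>
    rw [Finset.sum_range_succ, ih]
    have hp : d.choose (u + 1) = (d-1).choose u + (d-1).choose (u+1) := by
      conv_lhs => rw [show d = (d - 1) + 1 by omega]
      rw [Nat.choose_succ_succ]
    rw [hp]
    push_cast
    ring

lemma phi_eq (r u j : ℕ) :
    ∑ s ∈ Finset.Icc r (r + u), (-1 : ℤ) ^ (s - r) * (s.choose r) * (j.choose s)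
      = (if j = r then 1 else 0) +
        (if r + u < j then (-1 : ℤ) ^ u * (j.choose r) * ((j - r - 1).choose u) else 0) := by
  have hre : ∑ s ∈ Finset.Icc r (r + u), (-1 : ℤ) ^ (s - r) * (s.choose r) * (j.choose s)
      = ∑ i ∈ Finset.range (u + 1), (-1 : ℤ) ^ i * ((r + i).choose r) * (j.choose (r + i)) := by
    rw [show Finset.Icc r (r + u) = Finset.Ico r (r + u + 1) by
      ext x; simp [Nat.lt_succ_iff]]
    rw [Finset.sum_Ico_eq_sum_range]
    exact Finset.sum_congr (by congr 1; omega) fun i _ => by rw [Nat.add_sub_cancel_left]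
  rw [hre]
  have key : ∀ i, (-1 : ℤ) ^ i * ((r + i).choose r) * (j.choose (r + i))
      = (j.choose r : ℤ) * ((-1 : ℤ) ^ i * ((j - r).choose i)) := by
    intro i
    calc (-1 : ℤ) ^ i * ((r + i).choose r) * (j.choose (r + i))
        = (-1 : ℤ) ^ i * ((j.choose (r + i) * (r + i).choose r : ℕ) : ℤ) := by push_cast; ring
      _ = (-1 : ℤ) ^ i * ((j.choose r * (j - r).choose i : ℕ) : ℤ) := by rw [choose_helper]
      _ = (j.choose r : ℤ) * ((-1 : ℤ) ^ i * ((j - r).choose i)) := by push_cast; ring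
  simp only [key, ← Finset.mul_sum]
  rcases lt_trichotomy j r with hj | hj | hj
  · have : j.choose r = 0 := Nat.choose_eq_zero_of_lt hj
    simp [this, Nat.ne_of_lt hj, (by omega : ¬ (r + u < j))]
  · subst hj
    have : ∑ i ∈ Finset.range (u + 1), (-1 : ℤ) ^ i * ((j - j).choose i) = 1 := by
      rw [Finset.sum_eq_single 0]
      · simp
      · intro b _ hb
        simp [Nat.sub_self, Nat.choose_eq_zero_of_lt (by omega : 0 < b)]
      · simp
    simp only [Nat.sub_self] at this
    simp [this, (by omega : ¬ (j + u < j))]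
  · have hd : 1 ≤ j - r := by omega
    rw [alt_sum _ hd]
    have hne : ¬ (j = r) := by omega
    by_cases hu : r + u < j
    · rw [if_neg hne, if_pos hu]
      push_cast
      have : j - r - 1 = j - r - 1 := rfl
      ring
    · rw [if_neg hne, if_neg hu]
      have : (j - r - 1).choose u = 0 := Nat.choose_eq_zero_of_lt (by omega)
      simp [this]




lemma card_filter_subset_powersetCard {β : Type*} [DecidableEq β]
    (D Z : Finset β) (hZ : Z ⊆ D) (s : ℕ) :
    ((D.powersetCard s).filter fun S => S ⊆ Z).card = Z.card.choose s := by
  rw [← Finset.card_powersetCard]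
  congr 1
  ext S
  simp only [Finset.mem_filter, Finset.mem_powersetCard]
  constructor
  · rintro ⟨⟨_, hc⟩, hSZ⟩; exact ⟨hSZ, hc⟩
  · rintro ⟨hSZ, hc⟩; exact ⟨⟨hSZ.trans hZ, hc⟩, hSZ⟩

lemma bonferroni {α β : Type*} [DecidableEq α] [DecidableEq β]
    (W : Finset α) (Z : α → Finset β) (D : Finset β) (hZ : ∀ f ∈ W, Z f ⊆ D) (r u : ℕ) :
    (∑ s ∈ Finset.Icc r (r + u), (-1 : ℤ) ^ (s - r) * (s.choose r) *
        ∑ S ∈ D.powersetCard s, ((W.filter fun f => S ⊆ Z f).card : ℤ))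
      - ((W.filter fun f => (Z f).card = r).card : ℤ)
    = (-1 : ℤ) ^ u * ∑ f ∈ W.filter fun f => r + u < (Z f).card,
        (((Z f).card.choose r : ℤ) * (((Z f).card - r - 1).choose u)) := by
  have inner : ∀ s, (∑ S ∈ D.powersetCard s, ((W.filter fun f => S ⊆ Z f).card : ℤ))
      = ∑ f ∈ W, ((Z f).card.choose s : ℤ) := by
    intro s
    have h1 : ∀ S ∈ D.powersetCard s, ((W.filter fun f => S ⊆ Z f).card : ℤ)
        = ∑ f ∈ W, (if S ⊆ Z f then (1 : ℤ) else 0) := by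
      intro S _
      rw [Finset.card_filter]
      push_cast
      rfl
    rw [Finset.sum_congr rfl h1, Finset.sum_comm]
    refine Finset.sum_congr rfl fun f hf => ?_
    rw [← Finset.sum_filter, Finset.sum_const, card_filter_subset_powersetCard D (Z f) (hZ f hf) s]
    simp
  have hN : ((W.filter fun f => (Z f).card = r).card : ℤ)
      = ∑ f ∈ W, (if (Z f).card = r then (1 : ℤ) else 0) := by
    rw [Finset.card_filter]; push_cast; rfl
  calc (∑ s ∈ Finset.Icc r (r + u), (-1 : ℤ) ^ (s - r) * (s.choose r) *
        ∑ S ∈ D.powersetCard s, ((W.filter fun f => S ⊆ Z f).card : ℤ))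
      - ((W.filter fun f => (Z f).card = r).card : ℤ)
      = ∑ f ∈ W, ((∑ s ∈ Finset.Icc r (r + u), (-1 : ℤ) ^ (s - r) * (s.choose r) *
          ((Z f).card.choose s : ℤ)) - (if (Z f).card = r then (1 : ℤ) else 0)) := by
        rw [Finset.sum_sub_distrib, ← hN]
        congr 1
        rw [Finset.sum_congr rfl fun s _ => by rw [inner s]]
        simp only [Finset.mul_sum]
        rw [Finset.sum_comm]
    _ = ∑ f ∈ W, (if r + u < (Z f).card then
          (-1 : ℤ) ^ u * ((Z f).card.choose r : ℤ) * (((Z f).card - r - 1).choose u) else 0) := by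
        refine Finset.sum_congr rfl fun f _ => ?_
        rw [phi_eq, add_sub_cancel_left]
    _ = (-1 : ℤ) ^ u * ∑ f ∈ W.filter fun f => r + u < (Z f).card,
        (((Z f).card.choose r : ℤ) * (((Z f).card - r - 1).choose u)) := by
        rw [Finset.sum_filter, Finset.mul_sum]
        refine Finset.sum_congr rfl fun f _ => ?_
        split <;> ring

lemma bracket {α β : Type*} [DecidableEq α] [DecidableEq β]
    (W : Finset α) (Z : α → Finset β) (D : Finset β)
    (hZ : ∀ f ∈ W, Z f ⊆ D) (r k : ℕ) (hrk : r ≤ k) (A : ℕ → ℕ)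
    (hA : ∀ s ∈ Finset.Icc r k, ∀ S ∈ D.powersetCard s,
      (W.filter fun f => S ⊆ Z f).card = A s) :
    0 ≤ (-1 : ℤ) ^ (k - r) *
        ((∑ s ∈ Finset.Icc r k, (-1 : ℤ) ^ (s - r) * (s.choose r) * ((D.card.choose s) * A s))
          - ((W.filter fun f => (Z f).card = r).card : ℤ)) ∧
      (-1 : ℤ) ^ (k - r) *
        ((∑ s ∈ Finset.Icc r k, (-1 : ℤ) ^ (s - r) * (s.choose r) * ((D.card.choose s) * A s))
          - ((W.filter fun f => (Z f).card = r).card : ℤ))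
        ≤ (k.choose r) * (D.card.choose k) * A k := by
  have hσ2 : (-1 : ℤ) ^ (k - r) * (-1 : ℤ) ^ (k - r) = 1 := by
    rw [← pow_add]
    exact Even.neg_one_pow ⟨k - r, by ring⟩
  have hTgen : ∀ M, M ≤ k →
      (∑ s ∈ Finset.Icc r M, (-1 : ℤ) ^ (s - r) * (s.choose r) *
        ∑ S ∈ D.powersetCard s, ((W.filter fun f => S ⊆ Z f).card : ℤ))
      = ∑ s ∈ Finset.Icc r M, (-1 : ℤ) ^ (s - r) * (s.choose r) * ((D.card.choose s) * A s) := by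
    intro M hM
    refine Finset.sum_congr rfl fun s hs => ?_
    have hs' := Finset.mem_Icc.mp hs
    have hinner : (∑ S ∈ D.powersetCard s, ((W.filter fun f => S ⊆ Z f).card : ℤ))
        = (D.card.choose s : ℤ) * A s := by
      rw [Finset.sum_congr rfl (fun S hS => by
        rw [hA s (Finset.mem_Icc.mpr ⟨hs'.1, hs'.2.trans hM⟩) S hS])]
      rw [Finset.sum_const, Finset.card_powersetCard]
      push_cast
      ring
    rw [hinner]
  have main1 := bonferroni W Z D hZ r (k - r)
  rw [show r + (k - r) = k by omega] at main1
  rw [hTgen k le_rfl] at main1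
  constructor
  · rw [main1, ← mul_assoc, hσ2, one_mul]
    exact Finset.sum_nonneg fun f _ => by positivity
  · by_cases hkr : r = k
    · subst hkr
      rw [Nat.sub_self, pow_zero, one_mul]
      have hIcc : Finset.Icc r r = {r} := Finset.Icc_self r
      rw [hIcc, Finset.sum_singleton, Nat.sub_self, pow_zero, one_mul, Nat.choose_self]
      have hNc0 : (0:ℤ) ≤ ((W.filter fun f => (Z f).card = r).card : ℤ) := by positivity
      push_cast
      linarith
    · have main2 := bonferroni W Z D hZ r (k - 1 - r)
      rw [show r + (k - 1 - r) = k - 1 by omega] at main2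
      rw [hTgen (k-1) (by omega)] at main2
      set c₂ := ∑ f ∈ W.filter fun f => k - 1 < (Z f).card,
          (((Z f).card.choose r : ℤ) * (((Z f).card - r - 1).choose (k - 1 - r))) with hc₂def
      have hc₂ : (0:ℤ) ≤ c₂ := Finset.sum_nonneg fun f _ => by positivity
      set Tk1 := ∑ s ∈ Finset.Icc r (k-1), (-1 : ℤ) ^ (s - r) * (s.choose r) *
          ((D.card.choose s) * A s) with hTk1
      set Nc := ((W.filter fun f => (Z f).card = r).card : ℤ) with hNc
      have hsplit : (∑ s ∈ Finset.Icc r k, (-1 : ℤ) ^ (s - r) * (s.choose r) *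
          ((D.card.choose s) * A s))
          = Tk1 + (-1 : ℤ) ^ (k - r) * (k.choose r) * ((D.card.choose k) * A k) := by
        have h1 : Finset.Icc r k = insert k (Finset.Icc r (k-1)) := by
          ext x
          simp only [Finset.mem_Icc, Finset.mem_insert]
          omega
        rw [h1, Finset.sum_insert (by simp only [Finset.mem_Icc]; omega)]
        rw [hTk1]
        ring
      have hσodd : (-1 : ℤ) ^ (k - r) * (-1 : ℤ) ^ (k - 1 - r) = -1 := by
        rw [← pow_add]
        exact Odd.neg_one_pow ⟨k - 1 - r, by omega⟩
      calc (-1 : ℤ) ^ (k - r) * ((∑ s ∈ Finset.Icc r k, (-1 : ℤ) ^ (s - r) * (s.choose r) *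
              ((D.card.choose s) * A s)) - Nc)
          = ((-1:ℤ)^(k-r) * (-1:ℤ)^(k-1-r)) * c₂
            + ((-1:ℤ)^(k-r) * (-1:ℤ)^(k-r)) * ((k.choose r) * ((D.card.choose k) * A k)) := by
            rw [hsplit]
            linear_combination ((-1:ℤ)^(k-r)) * main2
        _ = -c₂ + (k.choose r) * ((D.card.choose k) * A k) := by rw [hσodd, hσ2]; ring
        _ ≤ (k.choose r) * (D.card.choose k) * (A k) := by
            have : ((k.choose r : ℤ)) * ((D.card.choose k) * A k)
                = (k.choose r) * (D.card.choose k) * (A k) := by ring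
            linarith




variable {Fq : Type*} [Field Fq] [Fintype Fq] [DecidableEq Fq]

/-- zero set of a tuple indexed by D -/
def Zfun (D : Finset Fq) (g : {x // x ∈ D} → Fq) : Finset Fq :=
  (Finset.univ.filter fun x : {x // x ∈ D} => g x = 0).map (Function.Embedding.subtype _)

lemma Zfun_subset (D : Finset Fq) (g : {x // x ∈ D} → Fq) : Zfun D g ⊆ D := by
  intro y hy
  simp only [Zfun, Finset.mem_map, Finset.mem_filter, Function.Embedding.coe_subtype] at hy
  obtain ⟨x, _, rfl⟩ := hy
  exact x.2

lemma mem_Zfun {D : Finset Fq} {g : {x // x ∈ D} → Fq} {x : {x // x ∈ D}} :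
    (x : Fq) ∈ Zfun D g ↔ g x = 0 := by
  simp only [Zfun, Finset.mem_map, Finset.mem_filter, Function.Embedding.coe_subtype,
    Finset.mem_filter, Finset.mem_univ, true_and]
  constructor
  · rintro ⟨y, hy, h⟩
    rwa [show y = x from Subtype.ext h] at hy
  · intro h; exact ⟨x, h, rfl⟩

lemma card_Zfun_filter_mem (D : Finset Fq) (S : Finset Fq) (hS : S ⊆ D) :
    (Finset.univ.filter fun x : {x // x ∈ D} => (x : Fq) ∈ S).card = S.card := by
  refine Finset.card_nbij (fun x => (x : Fq)) ?_ ?_ ?_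
  · intro x hx; simpa using (Finset.mem_filter.mp hx).2
  · intro x hx y hy hxy
    exact Subtype.ext hxy
  · intro y hy
    refine ⟨⟨y, hS hy⟩, ?_, rfl⟩
    simpa using hy

lemma card_fun_zero_on (D : Finset Fq) (S : Finset Fq) (hS : S ⊆ D) :
    (Finset.univ.filter fun g : {x // x ∈ D} → Fq => S ⊆ Zfun D g).card
      = Fintype.card Fq ^ (D.card - S.card) := by
  have hiff : ∀ g : {x // x ∈ D} → Fq, S ⊆ Zfun D g ↔ ∀ x : {x // x ∈ D}, (x : Fq) ∈ S → g x = 0 := by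
    intro g
    constructor
    · intro h x hx
      exact mem_Zfun.mp (h hx)
    · intro h y hy
      have : (⟨y, hS hy⟩ : {x // x ∈ D}).1 ∈ Zfun D g := mem_Zfun.mpr (h _ hy)
      exact this
  rw [Finset.filter_congr fun g _ => by rw [hiff g]]
  rw [← Fintype.card_subtype]
  rw [Fintype.card_congr (Equiv.subtypePiEquivPi (p := fun (x : {x // x ∈ D}) (y : Fq) => (x : Fq) ∈ S → y = 0))]
  rw [Fintype.card_pi]
  have hcard : ∀ x : {x // x ∈ D}, Fintype.card {y : Fq // (x : Fq) ∈ S → y = 0}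
      = if (x : Fq) ∈ S then 1 else Fintype.card Fq := by
    intro x
    by_cases h : (x : Fq) ∈ S
    · rw [if_pos h]
      rw [Fintype.card_congr (Equiv.subtypeEquivRight (q := fun y : Fq => y = 0) (by simp [h]))]
      exact Fintype.card_subtype_eq (0 : Fq)
    · rw [if_neg h]
      rw [Fintype.card_congr (Equiv.subtypeUnivEquiv (by simp [h]))]
  rw [Finset.prod_congr rfl fun x _ => hcard x]
  rw [Finset.prod_ite, Finset.prod_const, Finset.prod_const, one_pow, one_mul]
  congr 1
  have h1 : (Finset.univ.filter fun x : {x // x ∈ D} => ¬ (x : Fq) ∈ S).card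
      + (Finset.univ.filter fun x : {x // x ∈ D} => (x : Fq) ∈ S).card
      = Fintype.card {x // x ∈ D} := by
    rw [add_comm]
    exact Finset.card_filter_add_card_filter_not _
  rw [card_Zfun_filter_mem D S hS] at h1
  have h2 : Fintype.card {x // x ∈ D} = D.card := Fintype.card_coe D
  omega

lemma card_fun_exact_zeros (D : Finset Fq) (r : ℕ) :
    (Finset.univ.filter fun g : {x // x ∈ D} → Fq => (Zfun D g).card = r).card
      = D.card.choose r * (Fintype.card Fq - 1) ^ (D.card - r) := by
  rw [Finset.card_eq_sum_card_fiberwise (f := Zfun D) (t := D.powersetCard r)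
    (fun g hg => Finset.mem_powersetCard.mpr ⟨Zfun_subset D g, (Finset.mem_filter.mp hg).2⟩)]
  have hfiber : ∀ S ∈ D.powersetCard r,
      ((Finset.univ.filter fun g : {x // x ∈ D} → Fq => (Zfun D g).card = r).filter
        fun g => Zfun D g = S).card = (Fintype.card Fq - 1) ^ (D.card - r) := by
    intro S hS
    obtain ⟨hSD, hScard⟩ := Finset.mem_powersetCard.mp hS
    have heq : ∀ g : {x // x ∈ D} → Fq,
        (((Zfun D g).card = r) ∧ Zfun D g = S) ↔ ∀ x : {x // x ∈ D}, (g x = 0 ↔ (x : Fq) ∈ S) := by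
      intro g
      constructor
      · rintro ⟨-, hZS⟩ x
        rw [← mem_Zfun (g := g), hZS]
      · intro h
        have hZS : Zfun D g = S := by
          ext y
          constructor
          · intro hy
            have hyD := Zfun_subset D g hy
            have := (h ⟨y, hyD⟩).mp (mem_Zfun.mp hy)
            exact this
          · intro hy
            exact mem_Zfun.mpr ((h ⟨y, hSD hy⟩).mpr hy)
        exact ⟨hZS ▸ hScard, hZS⟩
    rw [Finset.filter_filter, Finset.filter_congr fun g _ => heq g]
    rw [← Fintype.card_subtype]
    rw [Fintype.card_congr (Equiv.subtypePiEquivPi (p := fun (x : {x // x ∈ D}) (y : Fq) => (y = 0 ↔ (x : Fq) ∈ S)))]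
    rw [Fintype.card_pi]
    have hcard : ∀ x : {x // x ∈ D}, Fintype.card {y : Fq // y = 0 ↔ (x : Fq) ∈ S}
        = if (x : Fq) ∈ S then 1 else Fintype.card Fq - 1 := by
      intro x
      by_cases h : (x : Fq) ∈ S
      · rw [if_pos h]
        rw [Fintype.card_congr (Equiv.subtypeEquivRight (q := fun y : Fq => y = 0) (by simp [h]))]
        exact Fintype.card_subtype_eq (0 : Fq)
      · rw [if_neg h]
        rw [Fintype.card_congr (Equiv.subtypeEquivRight (q := fun y : Fq => ¬ y = 0) (by simp [h]))]
        rw [Fintype.card_subtype_compl, Fintype.card_subtype_eq (0 : Fq)]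
    rw [Finset.prod_congr rfl fun x _ => hcard x]
    rw [Finset.prod_ite, Finset.prod_const, Finset.prod_const, one_pow, one_mul]
    congr 1
    have h1 : (Finset.univ.filter fun x : {x // x ∈ D} => ¬ (x : Fq) ∈ S).card
        + (Finset.univ.filter fun x : {x // x ∈ D} => (x : Fq) ∈ S).card
        = Fintype.card {x // x ∈ D} := by
      rw [add_comm]
      exact Finset.card_filter_add_card_filter_not _
    rw [card_Zfun_filter_mem D S hSD] at h1
    have h2 : Fintype.card {x // x ∈ D} = D.card := Fintype.card_coe D
    omega
  rw [Finset.sum_congr rfl hfiber, Finset.sum_const, Finset.card_powersetCard, smul_eq_mul]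


open scoped Classical


open scoped Classical

variable {Fq : Type*} [Field Fq] [Fintype Fq] [DecidableEq Fq]

noncomputable def bigF (Fq : Type*) [Field Fq] [Fintype Fq] [DecidableEq Fq] (N : ℕ) : Finset (Polynomial Fq) :=
  (Finset.univ : Finset (Fin (N+1) → Fq)).image fun c => ∑ i : Fin (N+1), C (c i) * X ^ (i : ℕ)

lemma mem_bigF {N : ℕ} {f : Polynomial Fq} (hf : f.natDegree ≤ N) : f ∈ bigF Fq N := by
  refine Finset.mem_image.mpr ⟨fun i => f.coeff i, Finset.mem_univ _, ?_⟩
  rw [Fin.sum_univ_eq_sum_range (fun i => C (f.coeff i) * X ^ i)]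
  conv_rhs => rw [Polynomial.as_sum_range' f (N+1) (Nat.lt_succ_of_le hf)]
  exact Finset.sum_congr rfl fun i _ => C_mul_X_pow_eq_monomial

noncomputable def classSet (ℓ N : ℕ) (Q a R : Polynomial Fq) : Finset (Polynomial Fq) :=
  (bigF Fq N).filter fun f =>
    f.Monic ∧ f.natDegree = N ∧ (X : Polynomial Fq) ^ (ℓ + 1) ∣ f.reverse - R ∧ Q ∣ f - a

lemma mem_classSet {ℓ N : ℕ} {Q a R f : Polynomial Fq} :
    f ∈ classSet ℓ N Q a R ↔
      f.Monic ∧ f.natDegree = N ∧ (X : Polynomial Fq) ^ (ℓ + 1) ∣ f.reverse - R ∧ Q ∣ f - a := by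
  constructor
  · exact fun h => (Finset.mem_filter.mp h).2
  · intro h
    exact Finset.mem_filter.mpr ⟨mem_bigF (le_of_eq h.2.1), h⟩

lemma card_classSet (ℓ t N : ℕ) (hN : t + ℓ ≤ N) (Q : Polynomial Fq) (hQm : Q.Monic)
    (hQt : Q.natDegree = t) (a R : Polynomial Fq) (hR : R.coeff 0 = 1) :
    (classSet ℓ N Q a R).card = Fintype.card Fq ^ (N - t - ℓ) := by
  classical
  set m := N - t - ℓ with hm
  -- top part of the polynomial, determined by R
  set TP : Polynomial Fq := ∑ i ∈ Finset.range (ℓ + 1), C (R.coeff i) * X ^ (N - i) with hTP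
  have hTPcoeff : ∀ i ≤ ℓ, TP.coeff (N - i) = R.coeff i := by
    intro i hi
    rw [hTP, Polynomial.finset_sum_coeff]
    rw [Finset.sum_eq_single i]
    · simp [coeff_C_mul, coeff_X_pow]
    · intro b hb hbi
      have hb' : b ≤ ℓ := Nat.lt_succ_iff.mp (Finset.mem_range.mp hb)
      simp only [coeff_C_mul, coeff_X_pow]
      rw [if_neg (by omega), mul_zero]
    · intro h; exact absurd (Finset.mem_range.mpr (Nat.lt_succ_of_le hi)) h
  have hTPhi : ∀ j, N < j → TP.coeff j = 0 := by
    intro j hj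
    rw [hTP, Polynomial.finset_sum_coeff]
    refine Finset.sum_eq_zero fun b _ => ?_
    simp only [coeff_C_mul, coeff_X_pow]
    rw [if_neg (by omega), mul_zero]
  set w : Polynomial Fq := (a - TP) %ₘ Q with hw
  have hQdeg : Q.degree = (t : ℕ) := by rw [← hQt]; exact degree_eq_natDegree hQm.ne_zero
  have hwcoeff : ∀ j, t ≤ j → w.coeff j = 0 := by
    intro j hj
    refine coeff_eq_zero_of_degree_lt
      (lt_of_lt_of_le (hQdeg ▸ degree_modByMonic_lt (a - TP) hQm) ?_)
    exact_mod_cast hj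
  set T : Polynomial Fq := TP + w with hT
  have hTcoeff : ∀ i ≤ ℓ, T.coeff (N - i) = R.coeff i := by
    intro i hi
    rw [hT, coeff_add, hTPcoeff i hi, hwcoeff _ (by omega), add_zero]
  have hThi : ∀ j, N < j → T.coeff j = 0 := by
    intro j hj
    rw [hT, coeff_add, hTPhi j hj, hwcoeff _ (by omega), add_zero]
  have hTdeg : T.natDegree ≤ N := natDegree_le_iff_coeff_eq_zero.mpr hThi
  have hmd := modByMonic_add_div (a - TP) Q
  have hQT : Q ∣ T - a := ⟨-((a - TP) /ₘ Q), by rw [hT, hw]; linear_combination hmd⟩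
  -- coefficients of the parameter polynomial
  have hpc : ∀ (c : Fin m → Fq) (j : ℕ), (∑ i : Fin m, C (c i) * X ^ (i : ℕ)).coeff j
      = if h : j < m then c ⟨j, h⟩ else 0 := by
    intro c j
    rw [Polynomial.finset_sum_coeff]
    by_cases h : j < m
    · rw [dif_pos h, Finset.sum_eq_single (⟨j, h⟩ : Fin m)]
      · simp [coeff_C_mul, coeff_X_pow]
      · intro b _ hb
        have hne : ¬ ((b : ℕ) = j) := fun hbj => hb (by ext; simp [hbj])
        simp only [coeff_C_mul, coeff_X_pow]
        rw [if_neg (by omega), mul_zero]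
      · simp
    · rw [dif_neg h]
      refine Finset.sum_eq_zero fun b _ => ?_
      have hb := b.isLt
      have hne : ¬ ((b : ℕ) = j) := by omega
      simp only [coeff_C_mul, coeff_X_pow]
      rw [if_neg (by omega), mul_zero]
  have hpdeg : ∀ c : Fin m → Fq, (∑ i : Fin m, C (c i) * X ^ (i : ℕ)).natDegree < m
      ∨ (∑ i : Fin m, C (c i) * X ^ (i : ℕ)) = 0 := by
    intro c
    by_cases h0 : (∑ i : Fin m, C (c i) * X ^ (i : ℕ)) = 0
    · exact Or.inr h0
    · left
      by_contra hge
      push_neg at hge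
      have := hpc c (∑ i : Fin m, C (c i) * X ^ (i : ℕ)).natDegree
      rw [dif_neg (by omega)] at this
      exact h0 (leadingCoeff_eq_zero.mp this)
  have hQp : ∀ (c : Fin m → Fq) (j : ℕ), N - ℓ ≤ j →
      (Q * ∑ i : Fin m, C (c i) * X ^ (i : ℕ)).coeff j = 0 := by
    intro c j hj
    rcases hpdeg c with hlt | h0
    · refine coeff_eq_zero_of_natDegree_lt (lt_of_le_of_lt (natDegree_mul_le) ?_)
      rw [hQt]
      omega
    · rw [h0, mul_zero, coeff_zero]
  -- the bijection
  rw [show Fintype.card Fq ^ m = (Finset.univ : Finset (Fin m → Fq)).card by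
    rw [Finset.card_univ, Fintype.card_fun, Fintype.card_fin]]
  refine Finset.card_bij' (fun f _ => (fun i : Fin m => ((f - T) /ₘ Q).coeff i))
    (fun c _ => T + Q * (∑ i : Fin m, C (c i) * X ^ (i : ℕ)))
    (fun _ _ => Finset.mem_univ _) ?_ ?_ ?_
  · -- the constructed polynomial is in the class
    intro c _
    set p : Polynomial Fq := ∑ i : Fin m, C (c i) * X ^ (i : ℕ) with hp
    have hFcoeff : ∀ i ≤ ℓ, (T + Q * p).coeff (N - i) = R.coeff i := by
      intro i hi
      rw [coeff_add, hTcoeff i hi, hQp c _ (by omega), add_zero]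
    have hFN : (T + Q * p).coeff N = 1 := by
      have := hFcoeff 0 (Nat.zero_le _)
      rwa [Nat.sub_zero, hR] at this
    have hFdeg : (T + Q * p).natDegree ≤ N := by
      refine natDegree_le_iff_coeff_eq_zero.mpr fun j hj => ?_
      rw [coeff_add, hThi j hj, hQp c _ (by omega), add_zero]
    have hFmonic : (T + Q * p).Monic := monic_of_natDegree_le_of_coeff_eq_one N hFdeg hFN
    have hFdeg' : (T + Q * p).natDegree = N :=
      le_antisymm hFdeg (le_natDegree_of_ne_zero (by rw [hFN]; exact one_ne_zero))
    refine mem_classSet.mpr ⟨hFmonic, hFdeg', ?_, ?_⟩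
    · rw [Polynomial.X_pow_dvd_iff]
      intro d hd
      have hd' : d ≤ ℓ := Nat.lt_succ_iff.mp hd
      rw [coeff_sub, coeff_reverse, hFdeg', revAt_le (by omega), hFcoeff d hd', sub_self]
    · have : T + Q * p - a = (T - a) + Q * p := by ring
      rw [this]
      exact dvd_add hQT (dvd_mul_right Q p)
  · -- left inverse
    intro f hf
    obtain ⟨hfm, hfd, hfrev, hfdvd⟩ := mem_classSet.mp hf
    have hfc : ∀ i ≤ ℓ, f.coeff (N - i) = R.coeff i := by
      intro i hi
      have := (Polynomial.X_pow_dvd_iff.mp hfrev) i (by omega)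
      rw [coeff_sub, sub_eq_zero, coeff_reverse, hfd, revAt_le (by omega)] at this
      exact this
    have hfT : ∀ j, N - ℓ ≤ j → (f - T).coeff j = 0 := by
      intro j hj
      rw [coeff_sub, sub_eq_zero]
      by_cases hjN : j ≤ N
      · have hiT := hTcoeff (N - j) (by omega)
        have hif := hfc (N - j) (by omega)
        rw [show N - (N - j) = j by omega] at hiT hif
        rw [hif, hiT]
      · rw [coeff_eq_zero_of_natDegree_lt (by omega : f.natDegree < j),
          coeff_eq_zero_of_natDegree_lt (by omega : T.natDegree < j)]
    have hQfT : Q ∣ f - T := by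
      have : f - T = (f - a) - (T - a) := by ring
      rw [this]
      exact dvd_sub hfdvd hQT
    set d : Polynomial Fq := (f - T) /ₘ Q with hd
    have hQd : Q * d = f - T := by
      have h0 : (f - T) %ₘ Q = 0 := (modByMonic_eq_zero_iff_dvd hQm).mpr hQfT
      have := modByMonic_add_div (f - T) Q
      rw [h0, zero_add] at this
      exact this
    have hdc : ∀ j, m ≤ j → d.coeff j = 0 := by
      intro j hj
      by_contra hne
      have hd0 : d ≠ 0 := fun h => hne (by simp [h])
      have hjd : j ≤ d.natDegree := le_natDegree_of_ne_zero hne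
      have hnd : (Q * d).natDegree = t + d.natDegree := by
        rw [natDegree_mul hQm.ne_zero hd0, hQt]
      have hlc : (f - T).coeff ((Q * d).natDegree) ≠ 0 := by
        rw [← hQd]
        exact leadingCoeff_ne_zero.mpr (mul_ne_zero hQm.ne_zero hd0)
      exact hlc (hfT _ (by omega))
    have hpd : (∑ i : Fin m, C (d.coeff (i : ℕ)) * X ^ (i : ℕ)) = d := by
      ext j
      rw [hpc]
      by_cases h : j < m
      · rw [dif_pos h]
      · rw [dif_neg h, hdc j (by omega)]
    simp only
    rw [hpd, hQd]
    ring
  · -- right inverse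
    intro c _
    set p : Polynomial Fq := ∑ i : Fin m, C (c i) * X ^ (i : ℕ) with hp
    have : T + Q * p - T = Q * p := by ring
    simp only [this]
    rw [mul_divByMonic_cancel_left p hQm]
    funext i
    rw [hpc c i, dif_pos i.isLt]

lemma card_classSet_vanishing (ℓ t N : ℕ) (Q ε : Polynomial Fq) (hQm : Q.Monic)
    (hQt : Q.natDegree = t) (hεm : ε.Monic) (S : Finset Fq) (hS : ∀ x ∈ S, Q.eval x ≠ 0)
    (hsN : S.card + t + ℓ ≤ N) :
    ((classSet ℓ N Q ε ε.reverse).filter fun f => ∀ x ∈ S, f.eval x = 0).card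
      = Fintype.card Fq ^ (N - S.card - t - ℓ) := by
  classical
  set s := S.card with hs
  set h : Polynomial Fq := ∏ x ∈ S, (X - C x) with hh
  have hhm : h.Monic := monic_prod_of_monic _ _ fun x _ => monic_X_sub_C x
  have hhdeg : h.natDegree = s := by
    rw [hh, natDegree_prod _ _ fun x _ => X_sub_C_ne_zero x]
    simp [natDegree_X_sub_C, hs]
  have hdvd_iff : ∀ f : Polynomial Fq, (∀ x ∈ S, f.eval x = 0) ↔ h ∣ f := by
    intro f
    constructor
    · intro hf
      refine Finset.prod_dvd_of_coprime ?_ fun x hx => (dvd_iff_isRoot).mpr (hf x hx)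
      intro x hx y hy hxy
      refine (irreducible_X_sub_C (x : Fq)).coprime_iff_not_dvd.mpr fun hd => ?_
      have := dvd_iff_isRoot.mp hd
      simp only [IsRoot, eval_sub, eval_X, eval_C] at this
      exact hxy (sub_eq_zero.mp this)
    · rintro ⟨g, hg⟩ x hx
      rw [hg, eval_mul, eval_prod, Finset.prod_eq_zero hx (by simp), zero_mul]
  have hcop : IsCoprime h Q := by
    rw [hh]
    refine IsCoprime.prod_left fun x hx => ?_
    refine (irreducible_X_sub_C (x : Fq)).coprime_iff_not_dvd.mpr fun hd => ?_
    exact hS x hx (dvd_iff_isRoot.mp hd)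
  have hrev0 : h.reverse.coeff 0 = 1 := by rw [coeff_zero_reverse]; exact hhm.leadingCoeff
  have hXrev : IsCoprime ((X : Polynomial Fq) ^ (ℓ + 1)) h.reverse := by
    refine IsCoprime.pow_left ?_
    refine (Polynomial.irreducible_X).coprime_iff_not_dvd.mpr fun hd => ?_
    rw [X_dvd_iff, hrev0] at hd
    exact one_ne_zero hd
  obtain ⟨u, v, huv⟩ := id hcop
  obtain ⟨u', v', huv'⟩ := hXrev.symm
  set a₀ : Polynomial Fq := u * ε with ha₀
  set R₀ : Polynomial Fq := u' * ε.reverse with hR₀def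
  have hεrev0 : ε.reverse.coeff 0 = 1 := by rw [coeff_zero_reverse]; exact hεm.leadingCoeff
  have hu'0 : u'.coeff 0 = 1 := by
    have h0 : (u' * h.reverse + v' * X ^ (ℓ + 1)).coeff 0 = 1 := by rw [huv']; simp
    rw [coeff_add, mul_coeff_zero, mul_coeff_zero, coeff_X_pow, if_neg (by omega),
      mul_zero, add_zero, hrev0, mul_one] at h0
    exact h0
  have hR₀ : R₀.coeff 0 = 1 := by rw [hR₀def, mul_coeff_zero, hu'0, hεrev0, mul_one]
  have hmodQ : ∀ g : Polynomial Fq, (Q ∣ h * g - ε) ↔ (Q ∣ g - a₀) := by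
    intro g
    have e1 : h * (g - a₀) = (h * g - ε) + ε * (v * Q) := by
      rw [ha₀]; linear_combination (-ε) * huv
    constructor
    · intro hdd
      refine IsCoprime.dvd_of_dvd_mul_left hcop.symm ?_
      rw [e1]
      exact dvd_add hdd ⟨ε * v, by ring⟩
    · intro hd
      have : h * g - ε = h * (g - a₀) - ε * (v * Q) := by rw [e1]; ring
      rw [this]
      exact dvd_sub (Dvd.dvd.mul_left hd h) ⟨ε * v, by ring⟩
  have hmodX : ∀ g : Polynomial Fq,
      ((X : Polynomial Fq) ^ (ℓ + 1) ∣ h.reverse * g - ε.reverse) ↔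
        ((X : Polynomial Fq) ^ (ℓ + 1) ∣ g - R₀) := by
    intro g
    have e1 : h.reverse * (g - R₀) = (h.reverse * g - ε.reverse) + ε.reverse * (v' * X ^ (ℓ + 1)) := by
      rw [hR₀def]; linear_combination (-ε.reverse) * huv'
    constructor
    · intro hd
      refine IsCoprime.dvd_of_dvd_mul_left hXrev ?_
      rw [e1]
      exact dvd_add hd ⟨ε.reverse * v', by ring⟩
    · intro hd
      have : h.reverse * g - ε.reverse = h.reverse * (g - R₀) - ε.reverse * (v' * X ^ (ℓ + 1)) := by
        rw [e1]; ring
      rw [this]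
      exact dvd_sub (Dvd.dvd.mul_left hd h.reverse) ⟨ε.reverse * v', by ring⟩
  -- the bijection f = h * g
  have key : ((classSet ℓ N Q ε ε.reverse).filter fun f => ∀ x ∈ S, f.eval x = 0).card
      = (classSet ℓ (N - s) Q a₀ R₀).card := by
    refine Finset.card_bij' (fun f _ => f /ₘ h) (fun g _ => h * g) ?_ ?_ ?_ ?_
    · intro f hf
      obtain ⟨hfc, heval⟩ := Finset.mem_filter.mp hf
      obtain ⟨hfm, hfd, hfrev, hfdvd⟩ := mem_classSet.mp hfc
      have hdvd : h ∣ f := (hdvd_iff f).mp heval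
      have hfeq : h * (f /ₘ h) = f := by
        have h0 : f %ₘ h = 0 := (modByMonic_eq_zero_iff_dvd hhm).mpr hdvd
        have := modByMonic_add_div f h
        rwa [h0, zero_add] at this
      set g := f /ₘ h with hg
      have hgm : g.Monic := hhm.of_mul_monic_left (hfeq.symm ▸ hfm)
      have hgdeg : g.natDegree = N - s := by
        have := natDegree_mul hhm.ne_zero hgm.ne_zero
        rw [hfeq, hfd, hhdeg] at this
        omega
      refine mem_classSet.mpr ⟨hgm, hgdeg, ?_, ?_⟩
      · rw [← hmodX g.reverse]
        have : h.reverse * g.reverse = f.reverse := by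
          rw [← hfeq]
          exact (reverse_mul (by rw [hhm.leadingCoeff, hgm.leadingCoeff, mul_one]; exact one_ne_zero)).symm
        rw [this]
        exact hfrev
      · rw [← hmodQ g, hfeq]
        exact hfdvd
    · intro g hg
      obtain ⟨hgm, hgdeg, hgrev, hgdvd⟩ := mem_classSet.mp hg
      have hsleN : s ≤ N := by omega
      refine Finset.mem_filter.mpr ⟨mem_classSet.mpr ⟨hhm.mul hgm, ?_, ?_, ?_⟩, ?_⟩
      · rw [natDegree_mul hhm.ne_zero hgm.ne_zero, hhdeg, hgdeg]
        omega
      · have : (h * g).reverse = h.reverse * g.reverse :=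
          reverse_mul (by rw [hhm.leadingCoeff, hgm.leadingCoeff, mul_one]; exact one_ne_zero)
        rw [this]
        exact (hmodX g.reverse).mpr hgrev
      · exact (hmodQ g).mpr hgdvd
      · intro x hx
        rw [eval_mul, hh, eval_prod, Finset.prod_eq_zero hx (by simp), zero_mul]
    · intro f hf
      obtain ⟨hfc, heval⟩ := Finset.mem_filter.mp hf
      have hdvd : h ∣ f := (hdvd_iff f).mp heval
      have h0 : f %ₘ h = 0 := (modByMonic_eq_zero_iff_dvd hhm).mpr hdvd
      have := modByMonic_add_div f h
      rwa [h0, zero_add] at this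
    · intro g _
      exact mul_divByMonic_cancel_left g hhm
  rw [key, card_classSet ℓ t (N - s) (by omega) Q hQm hQt a₀ R₀ hR₀]

lemma pow_sub_real (q : ℝ) (hq : 0 < q) (a b : ℕ) (h : b ≤ a) :
    q ^ (a - b) = q ^ a * (1 / q) ^ b := by
  have hb : q ^ b ≠ 0 := by positivity
  rw [one_div, inv_pow, ← div_eq_mul_inv]
  exact pow_sub₀ q hq.ne' h


end HayesAux

open HayesAux

theorem stmt0 {Fq : Type*} [Field Fq] [Fintype Fq] [DecidableEq Fq]
    (q t ℓ : ℕ) (hq : q = Fintype.card Fq)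
    (Q : Polynomial Fq) (hQm : Q.Monic) (hQt : Q.natDegree = t)
    (ε : Polynomial Fq) (hεm : ε.Monic) (hεQ : IsCoprime ε Q)
    (D : Finset Fq) (hD : ∀ x ∈ D, Q.eval x ≠ 0)
    (n : ℕ) (hn : n = D.card)
    (k r : ℕ) (hrk : r ≤ k) :
    |probY ℓ Q ε D k r -
        (n.choose r : ℝ) * (1 / (q : ℝ)) ^ r * (1 - 1 / (q : ℝ)) ^ (n - r)| ≤
      2 / ((k - r).factorial : ℝ) * (n.choose r : ℝ) * (1 / (q : ℝ)) ^ r := by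
  classical
  subst hq hn hQt
  set qc : ℕ := Fintype.card Fq with hqc
  set n : ℕ := D.card with hn
  set NN : ℕ := k + Q.natDegree + ℓ with hNN
  set W : Finset (Polynomial Fq) := classSet ℓ NN Q ε ε.reverse with hW
  set Zp : Polynomial Fq → Finset Fq := fun f => D.filter fun x => f.eval x = 0 with hZp
  have hq0 : (0:ℝ) < (qc : ℝ) := by exact_mod_cast Fintype.card_pos
  have hq1 : 1 ≤ qc := Fintype.card_pos
  -- Step 1 : express probY as a ratio of counts
  set Nc : ℕ := (W.filter fun f => (Zp f).card = r).card with hNc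
  have hPY : probY ℓ Q ε D k r = (Nc : ℝ) / (qc : ℝ) ^ k := by
    rw [probY]
    congr 2
    rw [show Nc = Nat.card (W.filter fun f => (Zp f).card = r)
      from (Nat.card_eq_finsetCard _).symm]
    refine Nat.card_congr (Equiv.subtypeEquivRight fun f => ?_)
    rw [Finset.mem_filter, hW, mem_classSet]
    simp only [HayesEquiv]
    constructor
    · rintro ⟨h1, h2, ⟨hc1, hc2, hrev, hmod⟩, h4⟩
      exact ⟨⟨h1, h2, dvd_sub_comm.mp hrev, dvd_sub_comm.mp hmod⟩, h4⟩
    · rintro ⟨⟨h1, h2, hrev, hmod⟩, h4⟩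
      refine ⟨h1, h2, ⟨hεQ, ?_, dvd_sub_comm.mp hrev, dvd_sub_comm.mp hmod⟩, h4⟩
      obtain ⟨c, hc⟩ := hmod
      have hf : f = ε + Q * c := by linear_combination hc
      rw [hf]
      exact hεQ.add_mul_left_left c
  -- Step 2 : bracketing for the polynomial model
  have hZ1 : ∀ f ∈ W, Zp f ⊆ D := fun f _ => Finset.filter_subset _ _
  have hA1 : ∀ s ∈ Finset.Icc r k, ∀ S ∈ D.powersetCard s,
      (W.filter fun f => S ⊆ Zp f).card = qc ^ (k - s) := by
    intro s hs S hS
    obtain ⟨hs1, hs2⟩ := Finset.mem_Icc.mp hs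
    obtain ⟨hSD, hScard⟩ := Finset.mem_powersetCard.mp hS
    have hprop : ∀ f : Polynomial Fq, (S ⊆ Zp f) ↔ (∀ x ∈ S, f.eval x = 0) := by
      intro f
      constructor
      · intro h x hx
        exact (Finset.mem_filter.mp (h hx)).2
      · intro h x hx
        exact Finset.mem_filter.mpr ⟨hSD hx, h x hx⟩
    rw [Finset.filter_congr fun f _ => hprop f, hW,
      card_classSet_vanishing ℓ Q.natDegree NN Q ε hQm rfl hεm S
        (fun x hx => hD x (hSD hx)) (by omega)]
    congr 1
    omega
  have bk1 := bracket W Zp D hZ1 r k hrk (fun s => qc ^ (k - s)) hA1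
  rw [← hn] at bk1
  -- Step 3 : bracketing for the iid model
  have bk2 := bracket (Finset.univ : Finset ({x // x ∈ D} → Fq)) (Zfun D) D
    (fun g _ => Zfun_subset D g) r k hrk (fun s => qc ^ (n - s))
    (by
      intro s hs S hS
      obtain ⟨hSD, hScard⟩ := Finset.mem_powersetCard.mp hS
      rw [card_fun_zero_on D S hSD, hScard])
  rw [← hn] at bk2
  set N'c : ℕ := ((Finset.univ : Finset ({x // x ∈ D} → Fq)).filter
    fun g => (Zfun D g).card = r).card with hN'c
  have hN'cval : N'c = n.choose r * (qc - 1) ^ (n - r) := card_fun_exact_zeros D r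
  -- Step 4 : real-number bracketing
  set tk : ℝ := ∑ s ∈ Finset.Icc r k,
    (-1:ℝ) ^ (s - r) * (s.choose r) * (n.choose s) * (1 / (qc:ℝ)) ^ s with htk
  have hT1 : ((∑ s ∈ Finset.Icc r k, (-1 : ℤ) ^ (s - r) * (s.choose r) *
      ((n.choose s : ℤ) * ((qc ^ (k - s) : ℕ) : ℤ)) : ℤ) : ℝ) = (qc:ℝ) ^ k * tk := by
    push_cast
    rw [htk, Finset.mul_sum]
    refine Finset.sum_congr rfl fun s hs => ?_
    obtain ⟨hs1, hs2⟩ := Finset.mem_Icc.mp hs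
    rw [pow_sub_real (qc:ℝ) hq0 k s hs2]
    ring
  have hT2 : ((∑ s ∈ Finset.Icc r k, (-1 : ℤ) ^ (s - r) * (s.choose r) *
      ((n.choose s : ℤ) * ((qc ^ (n - s) : ℕ) : ℤ)) : ℤ) : ℝ) = (qc:ℝ) ^ n * tk := by
    push_cast
    rw [htk, Finset.mul_sum]
    refine Finset.sum_congr rfl fun s hs => ?_
    by_cases hsn : s ≤ n
    · rw [pow_sub_real (qc:ℝ) hq0 n s hsn]
      ring
    · rw [Nat.choose_eq_zero_of_lt (show n < s by omega)]
      push_cast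
      ring
  have castle : ∀ a b : ℤ, a ≤ b → (a:ℝ) ≤ (b:ℝ) := fun a b h => Int.cast_le.mpr h
  have hσcast : (((-1:ℤ)^(k-r) : ℤ) : ℝ) = (-1:ℝ)^(k-r) := by push_cast; ring
  have hqk : (0:ℝ) < (qc:ℝ)^k := by positivity
  have hqn : (0:ℝ) < (qc:ℝ)^n := by positivity
  -- the four bracketing facts in ℝ
  have hX0 : (0:ℝ) ≤ (-1:ℝ)^(k-r) * ((qc:ℝ)^k * tk - (Nc:ℝ)) := by
    have h := castle _ _ bk1.1
    rw [Int.cast_mul, Int.cast_sub, hT1] at h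
    push_cast at h
    convert h using 2
  have hXle : (-1:ℝ)^(k-r) * ((qc:ℝ)^k * tk - (Nc:ℝ))
      ≤ (k.choose r : ℝ) * (n.choose k : ℝ) * (qc:ℝ)^(k-k) := by
    have h := castle _ _ bk1.2
    rw [Int.cast_mul, Int.cast_sub, hT1] at h
    push_cast at h
    convert h using 2
  have hY0 : (0:ℝ) ≤ (-1:ℝ)^(k-r) * ((qc:ℝ)^n * tk - (N'c:ℝ)) := by
    have h := castle _ _ bk2.1
    rw [Int.cast_mul, Int.cast_sub, hT2] at h
    push_cast at h
    convert h using 2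
  have hYle : (-1:ℝ)^(k-r) * ((qc:ℝ)^n * tk - (N'c:ℝ))
      ≤ (k.choose r : ℝ) * (n.choose k : ℝ) * (qc:ℝ)^(n-k) := by
    have h := castle _ _ bk2.2
    rw [Int.cast_mul, Int.cast_sub, hT2] at h
    push_cast at h
    convert h using 2
  set σ : ℝ := (-1:ℝ) ^ (k - r) with hσ
  have hσ2 : σ * σ = 1 := by
    rw [hσ, ← pow_add]
    exact Even.neg_one_pow ⟨k - r, by ring⟩
  set x : ℝ := (Nc : ℝ) / (qc:ℝ) ^ k with hx
  set y : ℝ := (N'c : ℝ) / (qc:ℝ) ^ n with hy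
  set term : ℝ := (k.choose r : ℝ) * (n.choose k) * (1/(qc:ℝ)) ^ k with hterm
  have hX0' : 0 ≤ σ * (tk - x) := by
    have heq : σ * (tk - x) = σ * ((qc:ℝ)^k * tk - Nc) / (qc:ℝ)^k := by
      rw [hx, mul_div_assoc, sub_div, mul_div_cancel_left₀ _ (ne_of_gt hqk)]
    rw [heq]
    positivity
  have hXle' : σ * (tk - x) ≤ term := by
    have heq : σ * (tk - x) = σ * ((qc:ℝ)^k * tk - Nc) / (qc:ℝ)^k := by
      rw [hx, mul_div_assoc, sub_div, mul_div_cancel_left₀ _ (ne_of_gt hqk)]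
    rw [heq, hterm, div_le_iff₀ hqk]
    calc σ * ((qc:ℝ)^k * tk - Nc) ≤ (k.choose r : ℝ) * (n.choose k : ℝ) * (qc:ℝ)^(k-k) := hXle
      _ = (k.choose r : ℝ) * (n.choose k) * (1/(qc:ℝ))^k * (qc:ℝ)^k := by
          rw [Nat.sub_self, pow_zero, one_div, inv_pow, mul_assoc, mul_assoc,
            inv_mul_cancel₀ (by positivity : ((qc:ℝ))^k ≠ 0)]
          ring
  have hY0' : 0 ≤ σ * (tk - y) := by
    have heq : σ * (tk - y) = σ * ((qc:ℝ)^n * tk - N'c) / (qc:ℝ)^n := by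
      rw [hy, mul_div_assoc, sub_div, mul_div_cancel_left₀ _ (ne_of_gt hqn)]
    rw [heq]
    positivity
  have hYle' : σ * (tk - y) ≤ term := by
    have heq : σ * (tk - y) = σ * ((qc:ℝ)^n * tk - N'c) / (qc:ℝ)^n := by
      rw [hy, mul_div_assoc, sub_div, mul_div_cancel_left₀ _ (ne_of_gt hqn)]
    rw [heq]
    have hstep : σ * ((qc:ℝ)^n * tk - N'c) / (qc:ℝ)^n
        ≤ (k.choose r : ℝ) * (n.choose k : ℝ) * (qc:ℝ)^(n-k) / (qc:ℝ)^n :=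
      (div_le_div_iff_of_pos_right hqn).mpr hYle
    refine hstep.trans (le_of_eq ?_)
    by_cases hkn : k ≤ n
    · rw [hterm, pow_sub_real (qc:ℝ) hq0 n k hkn]
      field_simp
    · rw [hterm, Nat.choose_eq_zero_of_lt (show n < k by omega)]
      push_cast
      simp
  -- |x - y| ≤ term
  have hxy : |x - y| ≤ term := by
    have hid : x - y = σ * ((σ * (tk - y)) - (σ * (tk - x))) := by
      have h' : σ * ((σ * (tk - y)) - (σ * (tk - x))) = (σ * σ) * ((tk - y) - (tk - x)) := by ring
      rw [h', hσ2]
      ring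
    rw [hid, abs_mul, show |σ| = 1 by rw [hσ, abs_pow, abs_neg, abs_one, one_pow], one_mul]
    rw [abs_le]
    constructor <;> linarith
  -- identify y with the binomial probability
  have hqc1 : ((qc - 1 : ℕ) : ℝ) = (qc:ℝ) - 1 := by
    have h1 : (1:ℕ) ≤ qc := hq1
    simp [Nat.cast_sub h1]
  have hyB : y = (n.choose r : ℝ) * (1 / (qc:ℝ)) ^ r * (1 - 1 / (qc:ℝ)) ^ (n - r) := by
    rw [hy, hN'cval]
    by_cases hrn : r ≤ n
    · push_cast [hqc1]
      have h1q : (1:ℝ) - 1/(qc:ℝ) = ((qc:ℝ) - 1) / (qc:ℝ) := by field_simp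
      rw [h1q, div_pow]
      rw [show (qc:ℝ)^n = (qc:ℝ)^r * (qc:ℝ)^(n-r) by rw [← pow_add]; congr 1; omega]
      have hqr : ((qc:ℝ))^r ≠ 0 := by positivity
      have hqnr : ((qc:ℝ))^(n-r) ≠ 0 := by positivity
      field_simp
      try ring
      rw [mul_inv_cancel₀ hq0.ne', mul_assoc, ← mul_pow, mul_sub, mul_one,
        mul_inv_cancel₀ hq0.ne']
      ring
    · rw [Nat.choose_eq_zero_of_lt (show n < r by omega)]
      push_cast
      simp
  -- final numeric bound
  rw [hPY, ← hyB]
  refine hxy.trans ?_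
  have hcc : (k.choose r : ℝ) * (n.choose k) = (n.choose r : ℝ) * ((n-r).choose (k-r)) := by
    have h0 := choose_helper n r (k - r)
    rw [show r + (k - r) = k by omega] at h0
    have h1 : ((n.choose k * k.choose r : ℕ) : ℝ) = ((n.choose r * (n-r).choose (k-r) : ℕ) : ℝ) := by
      rw [h0]
    push_cast at h1
    linarith
  have hfac : (0:ℝ) < ((k-r).factorial : ℝ) := by positivity
  have hbd : (((n-r).choose (k-r) : ℕ) : ℝ) ≤ ((n-r:ℕ):ℝ)^(k-r) / ((k-r).factorial : ℝ) :=
    Nat.choose_le_pow_div (k-r) (n-r)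
  have hnr : ((n-r:ℕ):ℝ) ≤ (qc:ℝ) := by
    have h1 : n - r ≤ n := Nat.sub_le n r
    have h2 : n ≤ qc := by rw [hn, hqc]; exact Finset.card_le_univ D
    exact_mod_cast h1.trans h2
  have hpow : ((n-r:ℕ):ℝ)^(k-r) ≤ (qc:ℝ)^(k-r) :=
    pow_le_pow_left₀ (by positivity) hnr _
  have hp1 : (qc:ℝ)^(k-r) * (1/(qc:ℝ))^k = (1/(qc:ℝ))^r := by
    have hsplit : (1/(qc:ℝ))^k = (1/(qc:ℝ))^(k-r) * (1/(qc:ℝ))^r := by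
      rw [← pow_add]
      congr 1
      omega
    rw [hsplit, ← mul_assoc, ← mul_pow, mul_one_div_cancel (ne_of_gt hq0), one_pow, one_mul]
  calc term = (n.choose r : ℝ) * ((n-r).choose (k-r)) * (1/(qc:ℝ))^k := by
        rw [hterm, hcc]
    _ ≤ (n.choose r : ℝ) * ((qc:ℝ)^(k-r) / ((k-r).factorial : ℝ)) * (1/(qc:ℝ))^k := by
        have hnn : (0:ℝ) ≤ (n.choose r : ℝ) := by positivity
        have hq' : (0:ℝ) ≤ (1/(qc:ℝ))^k := by positivity
        refine mul_le_mul_of_nonneg_right (mul_le_mul_of_nonneg_left ?_ hnn) hq'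
        exact hbd.trans ((div_le_div_iff_of_pos_right hfac).mpr hpow)
    _ = (n.choose r : ℝ) * (1/(qc:ℝ))^r / ((k-r).factorial : ℝ) := by
        rw [show (n.choose r : ℝ) * ((qc:ℝ)^(k-r) / ((k-r).factorial : ℝ)) * (1/(qc:ℝ))^k
            = (n.choose r : ℝ) * ((qc:ℝ)^(k-r) * (1/(qc:ℝ))^k) / ((k-r).factorial : ℝ) by ring,
          hp1]
    _ ≤ 2 / ((k - r).factorial : ℝ) * (n.choose r : ℝ) * (1 / (qc:ℝ)) ^ r := by
        have hpos : (0:ℝ) ≤ (n.choose r : ℝ) * (1/(qc:ℝ))^r := by positivity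
        calc (n.choose r : ℝ) * (1/(qc:ℝ))^r / ((k-r).factorial : ℝ)
            ≤ (2 * ((n.choose r : ℝ) * (1/(qc:ℝ))^r)) / ((k-r).factorial : ℝ) :=
              (div_le_div_iff_of_pos_right hfac).mpr (by linarith)
          _ = 2 / ((k - r).factorial : ℝ) * (n.choose r : ℝ) * (1 / (qc:ℝ)) ^ r := by ring
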